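/- For integers $a > d \geq 1$ and $r \geq 2$, the quantity $x_\star(r,d) = \log\left(\frac{a+1}{a}\right) \Big/ \log\left(\frac{(a+1)^r}{a(a-d)^{r-1}}\right)$ satisfies $0 < x_\star(r,d) < \frac{1}{d(r-1)}$. -/

import Mathlib

lemma xstar_aux (n : ℕ) : ∀ x : ℝ, (n : ℝ) < x → ((x + 1) / x) ^ n * (x - n) ≤ x + 1 := by
  induction n with
  | zero => intro x hx; simp only [pow_zero, Nat.cast_zero, one_mul, sub_zero]; linarith
  | succ n ih =>
    intro x hx
    push_cast at hx ⊢
    have hn0 : (0 : ℝ) ≤ (n : ℝ) := Nat.cast_nonneg n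
    have hx0 : (0 : ℝ) < x := by linarith
    have h1 : ((x + 1) / x) * (x - (n + 1)) ≤ x - n := by
      rw [div_mul_eq_mul_div, div_le_iff₀ hx0]
      nlinarith
    have h2 : ((x + 1) / x) ^ (n + 1) * (x - (n + 1))
        = ((x + 1) / x) ^ n * (((x + 1) / x) * (x - (n + 1))) := by ring
    have h3 : ((x + 1) / x) ^ n * (((x + 1) / x) * (x - (n + 1)))
        ≤ ((x + 1) / x) ^ n * (x - n) :=
      mul_le_mul_of_nonneg_left h1 (by positivity)
    have h4 := ih x (by linarith)
    push_cast at h4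
    linarith [h2 ▸ h3]

theorem xstar_bounds (a d : ℤ) (hd : 1 ≤ d) (had : d < a) (r : ℕ) (hr : 2 ≤ r) :
    0 < Real.log (((a : ℝ) + 1) / a) /
          Real.log (((a : ℝ) + 1) ^ r / ((a : ℝ) * ((a : ℝ) - d) ^ (r - 1))) ∧
    Real.log (((a : ℝ) + 1) / a) /
          Real.log (((a : ℝ) + 1) ^ r / ((a : ℝ) * ((a : ℝ) - d) ^ (r - 1)))
      < 1 / ((d : ℝ) * ((r : ℝ) - 1)) := by
  obtain ⟨s, rfl⟩ : ∃ s, r = s + 1 := ⟨r - 1, by omega⟩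
  have hs1 : 1 ≤ s := by omega
  have hd1 : (1 : ℝ) ≤ (d : ℝ) := by exact_mod_cast hd
  have hda : (d : ℝ) < (a : ℝ) := by exact_mod_cast had
  have hadr : (1 : ℝ) ≤ (a : ℝ) - d := by
    have h : (1 : ℤ) ≤ a - d := by omega
    have h2 : ((1 : ℤ) : ℝ) ≤ ((a - d : ℤ) : ℝ) := Int.cast_le.2 h
    push_cast at h2; linarith
  set A := (a : ℝ) with hA
  have hA0 : (0 : ℝ) < A := by linarith
  have hAd0 : (0 : ℝ) < A - d := by linarith
  have hN : 0 < Real.log ((A + 1) / A) :=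
    Real.log_pos (by rw [lt_div_iff₀ hA0]; linarith)
  have hL : 0 < Real.log ((A + 1) / (A - d)) :=
    Real.log_pos (by rw [lt_div_iff₀ hAd0]; linarith)
  have hrw : (A + 1) ^ (s + 1) / (A * (A - d) ^ (s + 1 - 1))
      = ((A + 1) / A) * ((A + 1) / (A - d)) ^ s := by
    simp only [Nat.add_sub_cancel]
    rw [div_pow]
    field_simp
    ring
  have hlog : Real.log ((A + 1) ^ (s + 1) / (A * (A - d) ^ (s + 1 - 1)))
      = Real.log ((A + 1) / A) + s * Real.log ((A + 1) / (A - d)) := by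
    rw [hrw, Real.log_mul (by positivity) (by positivity), Real.log_pow]
  have hD : 0 < Real.log ((A + 1) ^ (s + 1) / (A * (A - d) ^ (s + 1 - 1))) := by
    rw [hlog]; positivity
  -- key inequality: d * log((A+1)/A) ≤ log((A+1)/(A-d))
  have hdn : ((d.toNat : ℝ)) = (d : ℝ) := by
    exact_mod_cast Int.toNat_of_nonneg (by omega : (0:ℤ) ≤ d)
  have haux := xstar_aux d.toNat A (by rw [hdn]; exact hda)
  rw [hdn] at haux
  have hpowle : ((A + 1) / A) ^ d.toNat ≤ (A + 1) / (A - d) := by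
    rw [le_div_iff₀ hAd0]
    linarith
  have hdL : (d : ℝ) * Real.log ((A + 1) / A) ≤ Real.log ((A + 1) / (A - d)) := by
    have := Real.log_le_log (by positivity) hpowle
    rw [Real.log_pow, hdn] at this
    exact this
  constructor
  · exact div_pos hN hD
  · have hds : (0 : ℝ) < (d : ℝ) * ((s : ℝ) + 1 - 1) := by
      have : (1 : ℝ) ≤ (s : ℝ) := by exact_mod_cast hs1
      push_cast
      nlinarith
    push_cast
    simp only [Nat.add_sub_cancel] at hlog hD
    rw [div_lt_div_iff₀ hD hds, hlog]
    have hs0 : (0 : ℝ) ≤ (s : ℝ) := Nat.cast_nonneg s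
    have : (s : ℝ) * ((d : ℝ) * Real.log ((A + 1) / A))
        ≤ (s : ℝ) * Real.log ((A + 1) / (A - d)) :=
      mul_le_mul_of_nonneg_left hdL hs0
    nlinarith
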